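/- Let ξ = (ξ₁,…,ξ_M) have independent components and let P̃(ξ) = Σ_{k=0}^N βₖ Ψₖ(ξ) be a polynomial chaos expansion in a tensorized orthonormal basis (E[ΨⱼΨₖ] = δ_{jk}, Ψ₀ ≡ 1). Then the first-order Sobol' index of P̃ with respect to ξᵢ equals Sᵢ = (Σ_{k ∈ Kᵢ} βₖ²)/(Σ_{k=1}^N βₖ²), where Kᵢ is the set of indices k ≥ 1 such that Ψₖ depends only on ξᵢ. -/

import Mathlib

open MeasureTheory ProbabilityTheory

lemma variance_congr_ae' {Ω : Type*} [MeasurableSpace Ω] {μ : Measure Ω}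
    {f g : Ω → ℝ} (h : f =ᵐ[μ] g) : variance f μ = variance g μ := by
  have hi : ∫ x, f x ∂μ = ∫ x, g x ∂μ := integral_congr_ae h
  unfold ProbabilityTheory.variance ProbabilityTheory.evariance
  rw [hi]
  congr 1
  apply lintegral_congr_ae
  filter_upwards [h] with x hx
  rw [hx]

lemma integrable_mul_of_sq' {Ω : Type*} [MeasurableSpace Ω] {μ : Measure Ω}
    {f g : Ω → ℝ} (hf : AEStronglyMeasurable f μ) (hg : AEStronglyMeasurable g μ)
    (hf2 : Integrable (fun x => f x * f x) μ) (hg2 : Integrable (fun x => g x * g x) μ) :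
    Integrable (fun x => f x * g x) μ := by
  refine Integrable.mono (hf2.add hg2) (hf.mul hg) ?_
  filter_upwards with x
  simp only [Real.norm_eq_abs, abs_mul]
  simp only [Pi.add_apply]
  have h1 : |f x * f x + g x * g x| = f x * f x + g x * g x := by
    apply abs_of_nonneg; nlinarith [mul_self_nonneg (f x), mul_self_nonneg (g x)]
  rw [h1]
  nlinarith [sq_nonneg (|f x| - |g x|), sq_abs (f x), sq_abs (g x)]

theorem sobol_first_order_index_of_pce
    {Ω : Type*} [MeasurableSpace Ω] (P : Measure Ω) [IsProbabilityMeasure P]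
    (M N : ℕ) (hM : 0 < M)
    (ξ : Fin M → Ω → ℝ)
    (hξmeas : ∀ j, Measurable (ξ j))
    (hξindep : iIndepFun ξ P)
    (Ψ : Fin (N + 1) → (Fin M → ℝ) → ℝ)
    (hΨmeas : ∀ k, Measurable (Ψ k))
    (hΨ0 : Ψ 0 = fun _ => 1)
    (horthonormal : ∀ j k,
      ∫ ω, Ψ j (fun l => ξ l ω) * Ψ k (fun l => ξ l ω) ∂P =
        if j = k then 1 else 0)
    (htensor : ∀ k : Fin (N + 1), ∃ ψ : Fin M → ℝ → ℝ,
      (∀ x, Ψ k x = ∏ j, ψ j (x j)) ∧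
      (∀ j, (ψ j = fun _ => 1) ∨
        ((∫ ω, ψ j (ξ j ω) ∂P = 0) ∧ ∫ ω, (ψ j (ξ j ω)) ^ 2 ∂P = 1)))
    (β : Fin (N + 1) → ℝ)
    (K : Fin M → Finset (Fin (N + 1)))
    (hK : ∀ i k, k ∈ K i ↔ k ≠ 0 ∧ ∃ g : ℝ → ℝ, ∀ x, Ψ k x = g (x i))
    (hVar : 0 < variance (fun ω => ∑ k, β k * Ψ k (fun l => ξ l ω)) P) :
    ∀ i : Fin M,
      variance
          (condExp (MeasurableSpace.comap (ξ i) inferInstance) P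
            (fun ω => ∑ k, β k * Ψ k (fun l => ξ l ω))) P /
        variance (fun ω => ∑ k, β k * Ψ k (fun l => ξ l ω)) P =
      (∑ k ∈ K i, β k ^ 2) /
        ∑ k ∈ Finset.univ.filter (fun k => k ≠ 0), β k ^ 2 := by
  classical
  intro i
  set X : Fin (N + 1) → Ω → ℝ := fun k ω => Ψ k (fun l => ξ l ω) with hXdef
  have hm := (hξmeas i).comap_le
  haveI : SigmaFinite (P.trim hm) := inferInstance
  have hXmeas : ∀ k, Measurable (X k) := fun k =>
    (hΨmeas k).comp (measurable_pi_lambda _ hξmeas)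
  have hX0 : ∀ ω, X 0 ω = 1 := fun ω => by simp [hXdef, hΨ0]
  have horth : ∀ j k, ∫ ω, X j ω * X k ω ∂P = if j = k then 1 else 0 := horthonormal
  have hXsq_int : ∀ k, Integrable (fun ω => X k ω * X k ω) P := by
    intro k
    by_contra h
    have h0 := integral_undef h
    have h1 := horth k k
    rw [h0] at h1
    simp at h1
  have hXL2 : ∀ k, MemLp (X k) 2 P := by
    intro k
    refine (memLp_two_iff_integrable_sq (hXmeas k).aestronglyMeasurable).2 ?_
    simpa [pow_two] using hXsq_int k
  have hXint : ∀ k, Integrable (X k) P := fun k => (hXL2 k).integrable one_le_two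
  have hmul_int : ∀ j k, Integrable (fun ω => X j ω * X k ω) P := fun j k =>
    integrable_mul_of_sq' (hXmeas j).aestronglyMeasurable (hXmeas k).aestronglyMeasurable
      (hXsq_int j) (hXsq_int k)
  have hXmean : ∀ k, ∫ ω, X k ω ∂P = if 0 = k then 1 else 0 := by
    intro k
    have h := horth 0 k
    simpa [hX0] using h
  have hsum_L2 : ∀ S : Finset (Fin (N+1)), MemLp (fun ω => ∑ k ∈ S, β k * X k ω) 2 P :=
    fun S => memLp_finset_sum S (fun k _ => (hXL2 k).const_mul _)
  have hsum_mean : ∀ S : Finset (Fin (N+1)),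
      ∫ ω, (∑ k ∈ S, β k * X k ω) ∂P = if (0 : Fin (N+1)) ∈ S then β 0 else 0 := by
    intro S
    rw [integral_finset_sum S (fun k _ => (hXint k).const_mul _)]
    have h1 : ∀ k ∈ S, ∫ ω, β k * X k ω ∂P = if 0 = k then β k else 0 := by
      intro k _
      rw [integral_const_mul, hXmean k]
      split <;> simp
    rw [Finset.sum_congr rfl h1, Finset.sum_ite_eq]
  have hsum_sq : ∀ S : Finset (Fin (N+1)),
      ∫ ω, (∑ k ∈ S, β k * X k ω) ^ 2 ∂P = ∑ k ∈ S, (β k) ^ 2 := by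
    intro S
    have hexp : ∀ ω, (∑ k ∈ S, β k * X k ω) ^ 2
        = ∑ j ∈ S, ∑ k ∈ S, (β j * β k) * (X j ω * X k ω) := by
      intro ω
      rw [pow_two, Finset.sum_mul_sum]
      exact Finset.sum_congr rfl fun j _ => Finset.sum_congr rfl fun k _ => by ring
    simp only [hexp]
    rw [integral_finset_sum _ (fun j _ =>
      integrable_finset_sum _ (fun k _ => (hmul_int j k).const_mul _))]
    have h2 : ∀ j ∈ S, ∫ ω, (∑ k ∈ S, (β j * β k) * (X j ω * X k ω)) ∂P
        = ∑ k ∈ S, (β j * β k) * (if j = k then 1 else 0) := by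
      intro j _
      rw [integral_finset_sum _ (fun k _ => (hmul_int j k).const_mul _)]
      exact Finset.sum_congr rfl fun k _ => by rw [integral_const_mul, horth j k]
    rw [Finset.sum_congr rfl h2]
    refine Finset.sum_congr rfl fun j hj => ?_
    have h3 : ∀ k ∈ S, (β j * β k) * (if j = k then 1 else 0)
        = if j = k then β j * β k else 0 := fun k _ => by split <;> ring
    rw [Finset.sum_congr rfl h3, Finset.sum_ite_eq, if_pos hj, pow_two]
  have hvar : ∀ S : Finset (Fin (N+1)),
      variance (fun ω => ∑ k ∈ S, β k * X k ω) P = ∑ k ∈ S.erase 0, (β k) ^ 2 := by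
    intro S
    rw [variance_eq_sub (hsum_L2 S)]
    have h1 : ∫ ω, ((fun ω => ∑ k ∈ S, β k * X k ω) ^ 2) ω ∂P
        = ∫ ω, (∑ k ∈ S, β k * X k ω) ^ 2 ∂P := by simp
    rw [h1, hsum_sq S, hsum_mean S]
    by_cases h0 : (0 : Fin (N+1)) ∈ S
    · rw [if_pos h0, ← Finset.add_sum_erase S _ h0]
      ring
    · rw [if_neg h0, Finset.erase_eq_of_notMem h0]
      ring
  -- conditional expectation of each term
  have hcond : ∀ k : Fin (N+1),
      P[(fun ω => β k * X k ω)|MeasurableSpace.comap (ξ i) inferInstance] =ᵐ[P]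
        (if k ∈ insert (0:Fin (N+1)) (K i) then (fun ω => β k * X k ω) else 0) := by
    intro k
    by_cases hk : k ∈ insert (0:Fin (N+1)) (K i)
    · rw [if_pos hk]
      have hsm : StronglyMeasurable[MeasurableSpace.comap (ξ i) inferInstance] (X k) := by
        rcases Finset.mem_insert.mp hk with hk0 | hkK
        · subst hk0
          have h1 : X 0 = fun _ => (1:ℝ) := funext hX0
          rw [h1]
          exact stronglyMeasurable_const
        · obtain ⟨-, g0, hg0⟩ := (hK i k).1 hkK
          have hXeq : X k = (fun t => Ψ k (fun j => if j = i then t else (0:ℝ))) ∘ (ξ i) := by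
            funext ω
            show Ψ k (fun l => ξ l ω) = Ψ k (fun j => if j = i then ξ i ω else 0)
            rw [hg0, hg0]
            simp
          rw [hXeq]
          have hgmeas : Measurable (fun t => Ψ k (fun j => if j = i then t else (0:ℝ))) := by
            apply (hΨmeas k).comp
            apply measurable_pi_lambda
            intro j
            by_cases hj : j = i
            · simpa [hj] using measurable_id'
            · simp only [hj, if_false]
              exact measurable_const
          exact (hgmeas.comp (measurable_iff_comap_le.2 le_rfl)).stronglyMeasurable
      rw [condExp_of_stronglyMeasurable hm (hsm.const_mul (β k)) ((hXint k).const_mul _)]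
    · rw [if_neg hk]
      have hkne : k ≠ 0 := fun h => hk (by simp [h])
      have hknotK : k ∉ K i := fun h => hk (Finset.mem_insert_of_mem h)
      obtain ⟨ψ, hfac, halt⟩ := htensor k
      have hex : ∃ ω, X k ω ≠ 0 := by
        by_contra h
        push_neg at h
        have h1 := horth k k
        simp only [h, mul_zero, integral_zero, if_pos rfl] at h1
        exact zero_ne_one h1
      obtain ⟨ω₀, hω₀⟩ := hex
      have hane : ∀ j, ψ j (ξ j ω₀) ≠ 0 := by
        have h1 : ∏ j, ψ j (ξ j ω₀) ≠ 0 := by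
          rw [← hfac]; exact hω₀
        intro j
        exact Finset.prod_ne_zero_iff.1 h1 j (Finset.mem_univ j)
      have hψmeas : ∀ j, Measurable (ψ j) := by
        intro j
        have hc : (∏ l ∈ Finset.univ.erase j, ψ l (ξ l ω₀)) ≠ 0 :=
          Finset.prod_ne_zero_iff.2 fun l _ => hane l
        have heq : ψ j = fun t => Ψ k (Function.update (fun l => ξ l ω₀) j t) *
            (∏ l ∈ Finset.univ.erase j, ψ l (ξ l ω₀))⁻¹ := by
          funext t
          have h1 : Ψ k (Function.update (fun l => ξ l ω₀) j t)
              = ψ j t * ∏ l ∈ Finset.univ.erase j, ψ l (ξ l ω₀) := by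
            rw [hfac]
            have h2 : (fun l => ψ l (Function.update (fun l' => ξ l' ω₀) j t l))
                = Function.update (fun l => ψ l (ξ l ω₀)) j (ψ j t) := by
              funext l
              by_cases hl : l = j
              · subst hl; simp
              · simp [Function.update_of_ne hl]
            calc ∏ l, ψ l (Function.update (fun l' => ξ l' ω₀) j t l)
                = ∏ l, Function.update (fun l => ψ l (ξ l ω₀)) j (ψ j t) l := by rw [h2]
              _ = ψ j t * ∏ l ∈ Finset.univ \ {j}, ψ l (ξ l ω₀) :=
                  Finset.prod_update_of_mem (Finset.mem_univ j) _ _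
              _ = ψ j t * ∏ l ∈ Finset.univ.erase j, ψ l (ξ l ω₀) := by
                  rw [Finset.sdiff_singleton_eq_erase]
          rw [h1]
          field_simp
        rw [heq]
        exact ((hΨmeas k).comp (measurable_update _)).mul_const _
      have hj0 : ∃ j₀, j₀ ≠ i ∧ ∫ ω, ψ j₀ (ξ j₀ ω) ∂P = 0 := by
        by_contra h
        push_neg at h
        have hone : ∀ j, j ≠ i → ψ j = fun _ => (1:ℝ) := by
          intro j hj
          rcases halt j with h1 | h2
          · exact h1
          · exact absurd h2.1 (h j hj)
        apply hknotK
        refine (hK i k).2 ⟨hkne, ψ i, fun x => ?_⟩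
        rw [hfac x, ← Finset.mul_prod_erase Finset.univ (fun j => ψ j (x j)) (Finset.mem_univ i)]
        have h3 : ∀ j ∈ Finset.univ.erase i, ψ j (x j) = 1 := by
          intro j hj
          rw [hone j (Finset.ne_of_mem_erase hj)]
        rw [Finset.prod_congr rfl h3]
        simp
      obtain ⟨j₀, hj₀i, hj₀mean⟩ := hj0
      have hzero : (0 : Ω → ℝ) =ᵐ[P] P[X k|MeasurableSpace.comap (ξ i) inferInstance] := by
        refine ae_eq_condExp_of_forall_setIntegral_eq hm (hXint k)
          (fun s _ _ => integrableOn_zero) ?_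
          aestronglyMeasurable_const
        intro s hs _
        obtain ⟨A, hA, rfl⟩ := hs
        have hint0 : ∫ x in ξ i ⁻¹' A, (0:Ω → ℝ) x ∂P = 0 := by simp
        rw [hint0]
        symm
        rw [← integral_indicator (hm _ ⟨A, hA, rfl⟩)]
        have hGeq : (ξ i ⁻¹' A).indicator (X k)
            = fun ω => (ψ j₀ (ξ j₀ ω)) *
              ((Set.indicator A (fun _ => (1:ℝ)) (ξ i ω)) *
                ∏ j ∈ Finset.univ.erase j₀, ψ j (ξ j ω)) := by
          funext ω
          have hXfac : X k ω = ψ j₀ (ξ j₀ ω) * ∏ j ∈ Finset.univ.erase j₀, ψ j (ξ j ω) := by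
            rw [hXdef]
            simp only []
            rw [hfac, ← Finset.mul_prod_erase Finset.univ (fun j => ψ j (ξ j ω)) (Finset.mem_univ j₀)]
          by_cases hω : ξ i ω ∈ A
          · rw [Set.indicator_of_mem hω, Set.indicator_of_mem (by exact hω)]
            rw [hXfac]; ring
          · rw [Set.indicator_of_notMem hω, Set.indicator_of_notMem (by exact hω)]
            ring
        rw [hGeq]
        have hi_mem : i ∈ Finset.univ.erase j₀ :=
          Finset.mem_erase.2 ⟨Ne.symm hj₀i, Finset.mem_univ i⟩
        have hIndep : IndepFun (fun ω => ψ j₀ (ξ j₀ ω))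
            (fun ω => (Set.indicator A (fun _ => (1:ℝ)) (ξ i ω)) *
              ∏ j ∈ Finset.univ.erase j₀, ψ j (ξ j ω)) P := by
          have hbase := hξindep.indepFun_finset {j₀} (Finset.univ.erase j₀)
            (by simp) hξmeas
          have hφ : Measurable (fun y : ({j₀} : Finset (Fin M)) → ℝ =>
              ψ j₀ (y ⟨j₀, Finset.mem_singleton_self j₀⟩)) :=
            (hψmeas j₀).comp (measurable_pi_apply _)
          have hH : Measurable (fun y : ↥(Finset.univ.erase (j₀ : Fin M)) → ℝ =>
              (Set.indicator A (fun _ => (1:ℝ)) (y ⟨i, hi_mem⟩)) *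
                ∏ j : ↥(Finset.univ.erase (j₀ : Fin M)), ψ j.1 (y j)) := by
            apply Measurable.mul
            · exact (measurable_const.indicator hA).comp (measurable_pi_apply _)
            · exact Finset.measurable_prod _ (fun j _ => (hψmeas j.1).comp (measurable_pi_apply _))
          have hcomp := hbase.comp hφ hH
          have e2 : ((fun y : ↥(Finset.univ.erase (j₀ : Fin M)) → ℝ =>
              (Set.indicator A (fun _ => (1:ℝ)) (y ⟨i, hi_mem⟩)) *
                ∏ j : ↥(Finset.univ.erase (j₀ : Fin M)), ψ j.1 (y j)) ∘
                (fun ω (l : ↥(Finset.univ.erase (j₀ : Fin M))) => ξ l ω))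
              = fun ω => (Set.indicator A (fun _ => (1:ℝ)) (ξ i ω)) *
                ∏ j ∈ Finset.univ.erase j₀, ψ j (ξ j ω) := by
            funext ω
            simp only [Function.comp_apply]
            congr 1
            exact Finset.prod_coe_sort (Finset.univ.erase j₀) (fun j => ψ j (ξ j ω))
          rw [e2] at hcomp
          exact hcomp
        have hcalc := hIndep.integral_mul_eq_mul_integral
          ((hψmeas j₀).comp (hξmeas j₀)).aestronglyMeasurable
          ((((measurable_const.indicator hA).comp (hξmeas i)).mul
            (Finset.measurable_prod _ fun j _ => (hψmeas j).comp (hξmeas j))).aestronglyMeasurable)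
        have hmuleq : ((fun ω => ψ j₀ (ξ j₀ ω)) *
            (fun ω => (Set.indicator A (fun _ => (1:ℝ)) (ξ i ω)) *
              ∏ j ∈ Finset.univ.erase j₀, ψ j (ξ j ω)))
            = fun ω => (ψ j₀ (ξ j₀ ω)) *
              ((Set.indicator A (fun _ => (1:ℝ)) (ξ i ω)) *
                ∏ j ∈ Finset.univ.erase j₀, ψ j (ξ j ω)) := rfl
        rw [← hmuleq, hcalc, hj₀mean, zero_mul]
      have hsmul := condExp_smul (μ := P)
        (m := MeasurableSpace.comap (ξ i) inferInstance) (β k) (X k)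
      have heqf : (fun ω => β k * X k ω) = β k • X k := rfl
      rw [heqf]
      refine hsmul.trans ?_
      have := hzero.symm.const_smul (β k)
      refine this.trans ?_
      filter_upwards with ω
      simp
  have hcondsum : P[(fun ω => ∑ k, β k * X k ω)|MeasurableSpace.comap (ξ i) inferInstance]
      =ᵐ[P] fun ω => ∑ k ∈ insert (0:Fin (N+1)) (K i), β k * X k ω := by
    have h1 : (fun ω => ∑ k, β k * X k ω)
        = ∑ k : Fin (N+1), (fun ω => β k * X k ω) := by
      funext ω
      rw [Finset.sum_apply]
    rw [h1]
    refine (condExp_finset_sum (fun k _ => (hXint k).const_mul _) _).trans ?_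
    have h2 : ∀ᵐ ω ∂P, ∀ k : Fin (N+1),
        condExp (MeasurableSpace.comap (ξ i) inferInstance) P (fun ω' => β k * X k ω') ω
          = (if k ∈ insert (0:Fin (N+1)) (K i) then (fun ω' => β k * X k ω') else 0) ω := by
      rw [ae_all_iff]
      intro k
      exact hcond k
    filter_upwards [h2] with ω hω
    rw [Finset.sum_apply]
    rw [Finset.sum_congr rfl (fun k _ => hω k)]
    simp only [apply_ite (fun f : Ω → ℝ => f ω), Pi.zero_apply]
    rw [Finset.sum_ite_mem, Finset.univ_inter]
  have h0notK : (0 : Fin (N+1)) ∉ K i := fun h => ((hK i 0).1 h).1 rfl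
  have hfun : (fun ω => ∑ k, β k * Ψ k (fun l => ξ l ω)) = fun ω => ∑ k, β k * X k ω := rfl
  rw [hfun]
  have hnum : variance
      (P[(fun ω => ∑ k, β k * X k ω)|MeasurableSpace.comap (ξ i) inferInstance]) P
      = ∑ k ∈ K i, (β k) ^ 2 := by
    rw [variance_congr_ae' hcondsum, hvar (insert 0 (K i)), Finset.erase_insert h0notK]
  have hden : variance (fun ω => ∑ k, β k * X k ω) P
      = ∑ k ∈ Finset.univ.filter (fun k : Fin (N+1) => k ≠ 0), (β k) ^ 2 := by
    rw [hvar Finset.univ, Finset.filter_ne']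
  rw [hnum, hden]
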